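/- Let C be a small category and D a cosieve in C, i.e. a set of objects such that whenever d ∈ D and there exists a morphism d ⟶ c, then c ∈ D. For each object c of C let J(c) be the set of sieves S on c such that S contains every morphism g : d ⟶ c with d ∈ D. Then J is a Grothendieck topology on C, and restriction of presheaves along the inclusion of the full subcategory on D induces an equivalence of categories between the category Sheaf J (Type) of J-sheaves of types and the presheaf category Dᵒᵖ ⥤ Type. (The classifying topoi of essentially algebraic theories with falsum are exactly the closed subtopoi of free topoi, presented by cosieves.) -/

import Mathlib

universe u

open CategoryTheory Opposite

namespace Statement9Aux

variable {C : Type u} [SmallCategory C]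

/-- The topology generated by a cosieve. -/
def myJ (D : Set C) (hD : ∀ {d c : C}, d ∈ D → (d ⟶ c) → c ∈ D) : GrothendieckTopology C where
  sieves c := {S | ∀ (d : C) (g : d ⟶ c), d ∈ D → S g}
  top_mem' c d g hd := trivial
  pullback_stable' c c' S f hS d g hd := hS d (g ≫ f) hd
  transitive' c S hS R hR d g hd := by
    have h := hR (hS d g hd) d (𝟙 d) hd
    simpa using h

theorem sheaf_unique {D : Set C} (hD : ∀ {d c : C}, d ∈ D → (d ⟶ c) → c ∈ D)
    {F : Cᵒᵖ ⥤ Type u} (hF : Presieve.IsSheaf (myJ D hD) F)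
    {c : C} (hc : c ∉ D) : Nonempty (F.obj (op c)) ∧ Subsingleton (F.obj (op c)) := by
  have hbot : (⊥ : Sieve c) ∈ myJ D hD c := fun d g hd => (hc (hD hd g)).elim
  have hsh := hF (⊥ : Sieve c) hbot
  have x : Presieve.FamilyOfElements F (⊥ : Sieve c).arrows := fun d f hf => (hf : False).elim
  have hx : x.Compatible := by
    intro Y₁ Y₂ Z g₁ g₂ f₁ f₂ h₁ h₂ _
    exact (h₁ : False).elim
  obtain ⟨t, _, ht⟩ := hsh x hx
  have hamal : ∀ y : F.obj (op c), x.IsAmalgamation y := fun y d f hf => (hf : False).elim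
  exact ⟨⟨t⟩, ⟨fun a b => (ht a (hamal a)).trans (ht b (hamal b)).symm⟩⟩

theorem isSheaf_of {D : Set C} (hD : ∀ {d c : C}, d ∈ D → (d ⟶ c) → c ∈ D)
    {F : Cᵒᵖ ⥤ Type u}
    (h : ∀ c ∉ D, Nonempty (F.obj (op c)) ∧ Subsingleton (F.obj (op c))) :
    Presieve.IsSheaf (myJ D hD) F := by
  intro c S hS
  by_cases hc : c ∈ D
  · have : S = ⊤ := Sieve.id_mem_iff_eq_top.mp (hS c (𝟙 c) hc)
    subst this
    exact Presieve.isSheafFor_top_sieve F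
  · intro x hx
    obtain ⟨⟨t⟩, hsub⟩ := h c hc
    refine ⟨t, fun d f hf => ?_, fun y _ => @Subsingleton.elim _ hsub y t⟩
    have hd : d ∉ D := fun hdmem => hc (hD hdmem f)
    exact @Subsingleton.elim _ (h d hd).2 _ _

/-- Regard a morphism between underlying objects as a morphism in the full subcategory. -/
abbrev toD {D : Set C} {d' d : ObjectProperty.FullSubcategory fun x : C => x ∈ D}
    (g : d'.obj ⟶ d.obj) : d' ⟶ d := ObjectProperty.homMk g

/-- The extension of a presheaf on `D` to a `J`-sheaf on `C`, via the right Kan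
extension formula. -/
def ext (D : Set C) (P : (ObjectProperty.FullSubcategory fun c => c ∈ D)ᵒᵖ ⥤ Type u) : Cᵒᵖ ⥤ Type u where
  obj c := { s : ∀ (d : ObjectProperty.FullSubcategory fun x => x ∈ D) (_ : d.obj ⟶ c.unop), P.obj (op d) //
      ∀ (d d' : ObjectProperty.FullSubcategory fun x => x ∈ D) (h : d' ⟶ d) (g : d.obj ⟶ c.unop),
        P.map h.op (s d g) = s d' ((ObjectProperty.ι fun x => x ∈ D).map h ≫ g) }
  map f := TypeCat.ofHom fun s => ⟨fun d g => s.1 d (g ≫ f.unop), fun d d' h g => by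
    rw [s.2 d d' h (g ≫ f.unop), ← Category.assoc]⟩
  map_id c := by
    ext s; simp
  map_comp f g := by
    ext s; simp

theorem ext_singleton {D : Set C} (hD : ∀ {d c : C}, d ∈ D → (d ⟶ c) → c ∈ D)
    (P : (ObjectProperty.FullSubcategory fun c => c ∈ D)ᵒᵖ ⥤ Type u) {c : C} (hc : c ∉ D) :
    Nonempty ((ext D P).obj (op c)) ∧ Subsingleton ((ext D P).obj (op c)) := by
  constructor
  · exact ⟨⟨fun d g => (hc (hD d.2 g)).elim, fun d d' h g => (hc (hD d.2 g)).elim⟩⟩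
  · exact ⟨fun a b => Subtype.ext (funext fun d => funext fun g => (hc (hD d.2 g)).elim)⟩

/-- The equivalence between sections of the extension over an object of `D` and values
of the original presheaf. -/
def extEquiv (D : Set C) (P : (ObjectProperty.FullSubcategory fun c => c ∈ D)ᵒᵖ ⥤ Type u)
    (d : (ObjectProperty.FullSubcategory fun c => c ∈ D)ᵒᵖ) :
    (ext D P).obj (op d.unop.obj) ≃ P.obj d where
  toFun s := s.1 d.unop (𝟙 d.unop.obj)
  invFun x := ⟨fun d' g => P.map (toD g).op x, fun d' d'' h g => by
    rw [← FunctorToTypes.map_comp_apply]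
    rfl⟩
  left_inv s := by
    apply Subtype.ext
    funext d' g
    refine (s.2 d.unop d' (toD g) (𝟙 d.unop.obj)).trans ?_
    congr 1
    simp
  right_inv x := FunctorToTypes.map_id_apply P x

def extIso (D : Set C) (P : (ObjectProperty.FullSubcategory fun c => c ∈ D)ᵒᵖ ⥤ Type u) :
    (ObjectProperty.ι fun c => c ∈ D).op ⋙ ext D P ≅ P :=
  NatIso.ofComponents (fun d => (extEquiv D P d).toIso) (by
    intro d d' f
    ext s
    show s.1 d'.unop (𝟙 _ ≫ (ObjectProperty.ι fun c => c ∈ D).map f.unop)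
      = P.map f (s.1 d.unop (𝟙 _))
    have h2 := s.2 d.unop d'.unop f.unop (𝟙 d.unop.obj)
    have e : (𝟙 d'.unop.obj ≫ (ObjectProperty.ι fun c => c ∈ D).map f.unop)
        = ((ObjectProperty.ι fun c => c ∈ D).map f.unop ≫ 𝟙 d.unop.obj) := by simp
    calc s.1 d'.unop (𝟙 d'.unop.obj ≫ (ObjectProperty.ι fun c => c ∈ D).map f.unop)
        = s.1 d'.unop ((ObjectProperty.ι fun c => c ∈ D).map f.unop ≫ 𝟙 d.unop.obj) :=
          congrArg _ e
      _ = P.map f.unop.op (s.1 d.unop (𝟙 d.unop.obj)) := h2.symm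
      _ = P.map f (s.1 d.unop (𝟙 d.unop.obj)) := rfl)

end Statement9Aux

open Statement9Aux

/-- Classifying topoi of essentially algebraic theories with falsum are the closed
subtopoi of free topoi presented by cosieves: given a cosieve `D` in a small category
`C`, the sieves containing all morphisms out of objects of `D` form a Grothendieck
topology `J`, and restriction along the inclusion of the full subcategory on `D` induces
an equivalence between `J`-sheaves of types and presheaves of types on `D`. -/
theorem statement9 (C : Type u) [SmallCategory C] (D : Set C)
    (hD : ∀ {d c : C}, d ∈ D → (d ⟶ c) → c ∈ D) :
    ∃ J : GrothendieckTopology C,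
      (∀ (c : C) (S : Sieve c), S ∈ J c ↔ ∀ (d : C) (g : d ⟶ c), d ∈ D → S g) ∧
      (sheafToPresheaf J (Type u) ⋙
        (Functor.whiskeringLeft (ObjectProperty.FullSubcategory fun c => c ∈ D)ᵒᵖ Cᵒᵖ (Type u)).obj
          (ObjectProperty.ι fun c => c ∈ D).op).IsEquivalence := by
  classical
  refine ⟨myJ D hD, fun c S => Iff.rfl, ?_⟩
  set G := sheafToPresheaf (myJ D hD) (Type u) ⋙
      (Functor.whiskeringLeft (ObjectProperty.FullSubcategory fun c => c ∈ D)ᵒᵖ Cᵒᵖ (Type u)).obj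
        (ObjectProperty.ι fun c => c ∈ D).op with hG
  have singOf : ∀ (F : Sheaf (myJ D hD) (Type u)) {c : C}, c ∉ D →
      Nonempty (F.val.obj (op c)) ∧ Subsingleton (F.val.obj (op c)) := by
    intro F c hc
    exact sheaf_unique hD ((isSheaf_iff_isSheaf_of_type _ _).mp F.cond) hc
  have hfaithful : G.Faithful := by
    constructor
    intro F F' η η' hηη
    apply Sheaf.hom_ext
    apply NatTrans.ext
    funext c
    by_cases hc : c.unop ∈ D
    · exact NatTrans.congr_app hηη (op ⟨c.unop, hc⟩)
    · ext x
      exact @Subsingleton.elim _ (singOf F' hc).2 _ _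
  have hfull : G.Full := by
    constructor
    intro F F' α
    refine ⟨⟨{ app := fun c => if h : c.unop ∈ D then α.app (op ⟨c.unop, h⟩)
        else TypeCat.ofHom fun _ => Classical.choice (singOf F' h).1, naturality := ?_ }⟩, ?_⟩
    · intro c c' f
      by_cases h' : c'.unop ∈ D
      · have h : c.unop ∈ D := hD h' f.unop
        rw [dif_pos h, dif_pos h']
        exact α.naturality (Quiver.Hom.op
          (show (⟨c'.unop, h'⟩ : ObjectProperty.FullSubcategory fun x => x ∈ D) ⟶ ⟨c.unop, h⟩ from ObjectProperty.homMk f.unop))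
      · ext x
        exact @Subsingleton.elim _ (singOf F' h').2 _ _
    · apply NatTrans.ext
      funext d
      show (if h : d.unop.obj ∈ D then _ else _) = α.app d
      rw [dif_pos d.unop.2]
      rfl
  have hessSurj : G.EssSurj := by
    constructor
    intro P
    exact ⟨⟨ext D P, (isSheaf_iff_isSheaf_of_type _ _).mpr
      (isSheaf_of hD fun c hc => ext_singleton hD P hc)⟩, ⟨extIso D P⟩⟩
  exact { full := hfull, faithful := hfaithful, essSurj := hessSurj }
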